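/- Let S be the gluing of affine semigroups S_1 and S_2 with G(S_1) ∩ G(S_2) = dℤ. Then S is uniquely presented if and only if (a) S_1 and S_2 are uniquely presented, and (b) neither d - a nor a - d belongs to S, for every a ∈ Betti(S_1) ∪ Betti(S_2). -/

import Mathlib

open Finset

variable {M : Type*} [AddCommMonoid M] {r : ℕ}

/-- The factorization homomorphism associated to the generating tuple `A`. -/
def phi (A : Fin r → M) (u : Fin r → ℕ) : M := ∑ i, u i • A i

/-- One step of the relation `R`: two factorizations of `a` with nonzero dot product. -/
def step (A : Fin r → M) (a : M) (u v : Fin r → ℕ) : Prop :=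
  phi A u = a ∧ phi A v = a ∧ (∑ i, u i * v i) ≠ 0

/-- The relation `R` on the fiber of `a`: connected by a chain of factorizations with
consecutive nonzero dot products. -/
def Rrel (A : Fin r → M) (a : M) : (Fin r → ℕ) → (Fin r → ℕ) → Prop :=
  Relation.ReflTransGen (step A a)

/-- `a` is a Betti element: its fiber has more than one `R`-class. -/
def IsBetti (A : Fin r → M) (a : M) : Prop :=
  ∃ u v : Fin r → ℕ, phi A u = a ∧ phi A v = a ∧ ¬ Rrel A a u v

/-- `a` is Betti-minimal: a Betti element minimal with respect to `b ≺ a ↔ a - b ∈ S`. -/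
def BettiMinimal (A : Fin r → M) (a : M) : Prop :=
  IsBetti A a ∧ ∀ b : M, IsBetti A b → (∃ c : M, a = b + c) → b = a

/-- `a` has a unique presentation: exactly two factorizations, with disjoint support. -/
def HasUniquePres (A : Fin r → M) (a : M) : Prop :=
  ∃ u v : Fin r → ℕ, u ≠ v ∧ {w : Fin r → ℕ | phi A w = a} = {u, v} ∧
    (∑ i, u i * v i) = 0

/-- The monoid generated by `A` is uniquely presented: every Betti element has exactly two
factorizations, with disjoint support. -/
def UniquelyPresented (A : Fin r → M) : Prop :=
  ∀ a : M, IsBetti A a → HasUniquePres A a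

/- ## Group A : generic lemmas -/

theorem phi_add (A : Fin r → M) (u v : Fin r → ℕ) :
    phi A (u + v) = phi A u + phi A v := by
  simp [phi, add_smul, Finset.sum_add_distrib]

theorem phi_zero (A : Fin r → M) : phi A 0 = 0 := by simp [phi]

theorem phi_single (A : Fin r → M) (i : Fin r) (m : ℕ) :
    phi A (Pi.single i m) = m • A i := by
  simp [phi]

theorem phi_nsmul (A : Fin r → M) (m : ℕ) (u : Fin r → ℕ) :
    phi A (m • u) = m • phi A u := by
  simp only [phi, Pi.smul_apply, smul_eq_mul, mul_smul]
  rw [Finset.smul_sum]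

theorem mem_closure_iff_phi (A : Fin r → M) (x : M) :
    x ∈ AddSubmonoid.closure (Set.range A) ↔ ∃ u, phi A u = x := by
  constructor
  · intro hx
    induction hx using AddSubmonoid.closure_induction with
    | mem y hy =>
      obtain ⟨i, rfl⟩ := hy
      exact ⟨Pi.single i 1, by simp [phi_single]⟩
    | zero => exact ⟨0, phi_zero A⟩
    | add x y _ _ hx hy =>
      obtain ⟨u, rfl⟩ := hx; obtain ⟨v, rfl⟩ := hy
      exact ⟨u + v, phi_add A u v⟩
  · rintro ⟨u, rfl⟩
    exact AddSubmonoid.sum_mem _ fun i _ =>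
      AddSubmonoid.nsmul_mem _ (AddSubmonoid.subset_closure (Set.mem_range_self i)) _

theorem dot_comm (u v : Fin r → ℕ) : (∑ i, u i * v i) = ∑ i, v i * u i := by
  simp [mul_comm]

theorem dot_ne_zero_iff (u v : Fin r → ℕ) :
    (∑ i, u i * v i) ≠ 0 ↔ ∃ i, u i ≠ 0 ∧ v i ≠ 0 := by
  rw [Ne, Finset.sum_eq_zero_iff]
  push_neg
  constructor
  · rintro ⟨i, _, h⟩
    rw [mul_ne_zero_iff] at h
    exact ⟨i, h⟩
  · rintro ⟨i, h1, h2⟩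
    exact ⟨i, Finset.mem_univ i, mul_ne_zero h1 h2⟩

theorem step_symm (A : Fin r → M) (a : M) {u v : Fin r → ℕ} (h : step A a u v) :
    step A a v u := ⟨h.2.1, h.1, by rw [dot_comm]; exact h.2.2⟩

theorem Rrel_symm (A : Fin r → M) (a : M) {u v : Fin r → ℕ} (h : Rrel A a u v) :
    Rrel A a v u := by
  induction h with
  | refl => exact .refl
  | tail _ hstep ih => exact .trans (.single (step_symm A a hstep)) ih

theorem Rrel.trans' {A : Fin r → M} {a : M} {u v w : Fin r → ℕ}
    (h : Rrel A a u v) (h2 : Rrel A a v w) : Rrel A a u w := h.trans h2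

theorem step.rrel {A : Fin r → M} {a : M} {u v : Fin r → ℕ} (h : step A a u v) :
    Rrel A a u v := Relation.ReflTransGen.single h

theorem not_isBetti_rel {A : Fin r → M} {a : M} (h : ¬ IsBetti A a)
    {u v : Fin r → ℕ} (hu : phi A u = a) (hv : phi A v = a) : Rrel A a u v := by
  by_contra hc
  exact h ⟨u, v, hu, hv, hc⟩

theorem first_move {A : Fin r → M} {a : M} {u v : Fin r → ℕ}
    (h : Rrel A a u v) (hne : u ≠ v) : ∃ q, step A a u q ∧ u ≠ q := by
  induction h using Relation.ReflTransGen.head_induction_on with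
  | refl => exact absurd rfl hne
  | head hstep _ ih =>
    rename_i b c _
    by_cases hbc : b = c
    · subst hbc; exact ih hne
    · exact ⟨c, hstep, hbc⟩

theorem sub_single_add {u : Fin r → ℕ} {i : Fin r} (h : u i ≠ 0) :
    Pi.single i 1 + (u - Pi.single i 1) = u := by
  funext j
  by_cases hj : j = i
  · subst hj; simp [Pi.single_apply]; omega
  · simp [Pi.single_apply, hj]

theorem phi_sub_single (A : Fin r → M) {u : Fin r → ℕ} {i : Fin r} (h : u i ≠ 0) :
    phi A u = A i + phi A (u - Pi.single i 1) := by
  conv_lhs => rw [← sub_single_add h]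
  rw [phi_add, phi_single, one_smul]

theorem sum_sub_single {u : Fin r → ℕ} {i : Fin r} (h : u i ≠ 0) :
    (∑ j, (u - Pi.single i 1 : Fin r → ℕ) j) < ∑ j, u j := by
  have h1 : ∀ j, (u - Pi.single i 1 : Fin r → ℕ) j ≤ u j := by
    intro j; by_cases hj : j = i <;> simp [Pi.single_apply, hj]
  have h2 : (u - Pi.single i 1 : Fin r → ℕ) i < u i := by
    simp [Pi.single_apply]; omega
  exact Finset.sum_lt_sum (fun j _ => h1 j) ⟨i, Finset.mem_univ i, h2⟩

/-- Below any element with two distinct factorizations there is a Betti element. -/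
theorem betti_divisor {N : Type*} [AddCommGroup N] {s : ℕ} (B : Fin s → N)
    (h0 : ∀ t, phi B t = 0 → t = 0) :
    ∀ m (u v : Fin s → ℕ) (x : N), (∑ i, u i) ≤ m → phi B u = x → phi B v = x → u ≠ v →
      ∃ b w, IsBetti B b ∧ b + phi B w = x := by
  intro m
  induction m with
  | zero =>
    intro u v x hm hu hv hne
    have : u = 0 := by
      funext j
      have := Finset.sum_eq_zero_iff.1 (Nat.le_zero.1 hm) j (Finset.mem_univ j)
      simpa using this
    subst this
    rw [phi_zero] at hu
    exact absurd (h0 v (hv.trans hu.symm)).symm hne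
  | succ m ih =>
    intro u v x hm hu hv hne
    by_cases hb : IsBetti B x
    · exact ⟨x, 0, hb, by rw [phi_zero, add_zero]⟩
    · have hrel : Rrel B x u v := not_isBetti_rel hb hu hv
      obtain ⟨q, hstep, hq⟩ := first_move hrel hne
      obtain ⟨i, hui, hqi⟩ := (dot_ne_zero_iff u q).1 hstep.2.2
      have hu' : phi B (u - Pi.single i 1) = x - B i := by
        rw [phi_sub_single B hui] at hu
        rw [← hu]; abel
      have hq' : phi B (q - Pi.single i 1) = x - B i := by
        have := hstep.2.1
        rw [phi_sub_single B hqi] at this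
        rw [← this]; abel
      have hne' : u - Pi.single i 1 ≠ q - Pi.single i 1 := by
        intro hc
        apply hq
        rw [← sub_single_add hui, ← sub_single_add hqi, hc]
      have hm' : (∑ j, (u - Pi.single i 1 : Fin s → ℕ) j) ≤ m :=
        Nat.lt_succ_iff.1 (lt_of_lt_of_le (sum_sub_single hui) hm)
      obtain ⟨b, w, hbb, hbw⟩ := ih _ _ _ hm' hu' hq' hne'
      refine ⟨b, w + Pi.single i 1, hbb, ?_⟩
      rw [phi_add, phi_single, one_smul, ← add_assoc, hbw]
      abel

/- ## Group B : append structure -/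

variable {r₁ r₂ : ℕ}

def fstP (u : Fin (r₁ + r₂) → ℕ) : Fin r₁ → ℕ := u ∘ Fin.castAdd r₂
def sndP (u : Fin (r₁ + r₂) → ℕ) : Fin r₂ → ℕ := u ∘ Fin.natAdd r₁

theorem append_parts (u : Fin (r₁ + r₂) → ℕ) : Fin.append (fstP u) (sndP u) = u := by
  funext i
  induction i using Fin.addCases with
  | left i => simp [fstP, Fin.append_left]
  | right i => simp [sndP, Fin.append_right]

theorem fstP_append (x : Fin r₁ → ℕ) (y : Fin r₂ → ℕ) : fstP (Fin.append x y) = x := by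
  funext i; simp [fstP, Fin.append_left]

theorem sndP_append (x : Fin r₁ → ℕ) (y : Fin r₂ → ℕ) : sndP (Fin.append x y) = y := by
  funext i; simp [sndP, Fin.append_right]

theorem phi_append (A₁ : Fin r₁ → M) (A₂ : Fin r₂ → M) (u : Fin (r₁ + r₂) → ℕ) :
    phi (Fin.append A₁ A₂) u = phi A₁ (fstP u) + phi A₂ (sndP u) := by
  rw [phi, Fin.sum_univ_add]
  congr 1
  · exact Finset.sum_congr rfl fun i _ => by simp [fstP, Fin.append_left]
  · exact Finset.sum_congr rfl fun i _ => by simp [sndP, Fin.append_right]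

theorem phi_append' (A₁ : Fin r₁ → M) (A₂ : Fin r₂ → M) (x : Fin r₁ → ℕ) (y : Fin r₂ → ℕ) :
    phi (Fin.append A₁ A₂) (Fin.append x y) = phi A₁ x + phi A₂ y := by
  rw [phi_append, fstP_append, sndP_append]

theorem dot_append (x x' : Fin r₁ → ℕ) (y y' : Fin r₂ → ℕ) :
    (∑ i, Fin.append x y i * Fin.append x' y' i) = (∑ i, x i * x' i) + ∑ i, y i * y' i := by
  rw [Fin.sum_univ_add]
  congr 1
  · exact Finset.sum_congr rfl fun i _ => by simp [Fin.append_left]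
  · exact Finset.sum_congr rfl fun i _ => by simp [Fin.append_right]

theorem dot_split (u v : Fin (r₁ + r₂) → ℕ) :
    (∑ i, u i * v i) = (∑ i, fstP u i * fstP v i) + ∑ i, sndP u i * sndP v i := by
  conv_lhs => rw [← append_parts u, ← append_parts v]
  rw [dot_append]

theorem append_zero_eq_zero_iff (x : Fin r₁ → ℕ) :
    Fin.append x (0 : Fin r₂ → ℕ) = 0 ↔ x = 0 := by
  constructor
  · intro h; rw [← fstP_append x (0 : Fin r₂ → ℕ), h]; rfl
  · rintro rfl
    funext i
    induction i using Fin.addCases with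
    | left i => simp [Fin.append_left]
    | right i => simp [Fin.append_right]

theorem zero_append_eq_zero_iff (y : Fin r₂ → ℕ) :
    Fin.append (0 : Fin r₁ → ℕ) y = 0 ↔ y = 0 := by
  constructor
  · intro h; rw [← sndP_append (0 : Fin r₁ → ℕ) y, h]; rfl
  · rintro rfl
    funext i
    induction i using Fin.addCases with
    | left i => simp [Fin.append_left]
    | right i => simp [Fin.append_right]

theorem lift_left {A₁ : Fin r₁ → M} {A₂ : Fin r₂ → M} {a : M} {x y : Fin r₁ → ℕ}
    (h : Rrel A₁ a x y) :
    Rrel (Fin.append A₁ A₂) (a + phi A₂ (0 : Fin r₂ → ℕ)) (Fin.append x 0) (Fin.append y 0) := by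
  induction h with
  | refl => exact .refl
  | tail _ hstep ih =>
    refine ih.tail ⟨?_, ?_, ?_⟩
    · rw [phi_append', hstep.1]
    · rw [phi_append', hstep.2.1]
    · rw [dot_append]
      simpa using hstep.2.2

theorem lift_left' {A₁ : Fin r₁ → M} {A₂ : Fin r₂ → M} {a : M} {x y : Fin r₁ → ℕ}
    (h : Rrel A₁ a x y) :
    Rrel (Fin.append A₁ A₂) a (Fin.append x 0) (Fin.append y 0) := by
  have := lift_left (A₂ := A₂) h
  rwa [phi_zero, add_zero] at this

theorem lift_right' {A₁ : Fin r₁ → M} {A₂ : Fin r₂ → M} {a : M} {x y : Fin r₂ → ℕ}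
    (h : Rrel A₂ a x y) :
    Rrel (Fin.append A₁ A₂) a (Fin.append 0 x) (Fin.append 0 y) := by
  induction h with
  | refl => exact .refl
  | tail _ hstep ih =>
    refine ih.tail ⟨?_, ?_, ?_⟩
    · rw [phi_append', phi_zero, hstep.1, zero_add]
    · rw [phi_append', phi_zero, hstep.2.1, zero_add]
    · rw [dot_append]
      simpa using hstep.2.2

/- ## Group C : lemmas using the gluing hypotheses -/

section Glue

variable {n : ℕ} {A₁ : Fin r₁ → (Fin n → ℤ)} {A₂ : Fin r₂ → (Fin n → ℤ)} {d : Fin n → ℤ}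

theorem range_left_subset : Set.range A₁ ⊆ Set.range (Fin.append A₁ A₂) := by
  rintro x ⟨i, rfl⟩
  exact ⟨Fin.castAdd r₂ i, Fin.append_left A₁ A₂ i⟩

theorem range_right_subset : Set.range A₂ ⊆ Set.range (Fin.append A₁ A₂) := by
  rintro x ⟨i, rfl⟩
  exact ⟨Fin.natAdd r₁ i, Fin.append_right A₁ A₂ i⟩

/-- G1 : the appended monoid has no nontrivial factorization of 0. -/
theorem phi_eq_zero_imp
    (hmin : ∀ i : Fin (r₁ + r₂), ¬ ∃ u : Fin (r₁ + r₂) → ℕ,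
      u i = 0 ∧ phi (Fin.append A₁ A₂) u = Fin.append A₁ A₂ i)
    (hred : ∀ x ∈ AddSubmonoid.closure (Set.range (Fin.append A₁ A₂)),
      -x ∈ AddSubmonoid.closure (Set.range (Fin.append A₁ A₂)) → x = 0) :
    ∀ t, phi (Fin.append A₁ A₂) t = 0 → t = 0 := by
  intro t ht
  by_contra hne
  have : ∃ i, t i ≠ 0 := by
    by_contra hc; push_neg at hc
    exact hne (funext hc)
  obtain ⟨i, hi⟩ := this
  set A := Fin.append A₁ A₂
  have h1 : phi A t = A i + phi A (t - Pi.single i 1) := phi_sub_single A hi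
  have hAimem : A i ∈ AddSubmonoid.closure (Set.range A) :=
    AddSubmonoid.subset_closure (Set.mem_range_self i)
  have hAi : A i = 0 := by
    apply hred _ hAimem
    rw [(mem_closure_iff_phi A _)]
    refine ⟨t - Pi.single i 1, ?_⟩
    rw [ht] at h1
    linear_combination (norm := module) -h1
  exact hmin i ⟨0, rfl, by rw [phi_zero, hAi]⟩

theorem phi1_eq_zero_imp
    (h0 : ∀ t, phi (Fin.append A₁ A₂) t = 0 → t = 0) :
    ∀ t, phi A₁ t = 0 → t = 0 := by
  intro t ht
  have : phi (Fin.append A₁ A₂) (Fin.append t 0) = 0 := by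
    rw [phi_append', ht, phi_zero, add_zero]
  have := h0 _ this
  exact (append_zero_eq_zero_iff t).1 this

theorem phi2_eq_zero_imp
    (h0 : ∀ t, phi (Fin.append A₁ A₂) t = 0 → t = 0) :
    ∀ t, phi A₂ t = 0 → t = 0 := by
  intro t ht
  have : phi (Fin.append A₁ A₂) (Fin.append 0 t) = 0 := by
    rw [phi_append', ht, phi_zero, zero_add]
  have := h0 _ this
  exact (zero_append_eq_zero_iff t).1 this

theorem phi_mem_subgroup (B : Fin r → (Fin n → ℤ)) (u : Fin r → ℕ) :
    phi B u ∈ AddSubgroup.closure (Set.range B) :=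
  AddSubgroup.sum_mem _ fun i _ =>
    AddSubgroup.nsmul_mem _ (AddSubgroup.subset_closure (Set.mem_range_self i)) _

/-- The key gluing lemma : the first parts of two factorizations of the same element
differ by an integer multiple of `d`. -/
theorem key_k_lemma
    (hglue : AddSubgroup.closure (Set.range A₁) ⊓ AddSubgroup.closure (Set.range A₂)
      = AddSubgroup.zmultiples d)
    {u v : Fin (r₁ + r₂) → ℕ} (h : phi (Fin.append A₁ A₂) u = phi (Fin.append A₁ A₂) v) :
    ∃ k : ℤ, phi A₁ (fstP u) = phi A₁ (fstP v) + k • d ∧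
      phi A₂ (sndP v) = phi A₂ (sndP u) + k • d := by
  rw [phi_append, phi_append] at h
  have hx : phi A₁ (fstP u) - phi A₁ (fstP v) ∈ AddSubgroup.zmultiples d := by
    rw [← hglue, AddSubgroup.mem_inf]
    constructor
    · exact sub_mem (phi_mem_subgroup A₁ _) (phi_mem_subgroup A₁ _)
    · have : phi A₁ (fstP u) - phi A₁ (fstP v) = phi A₂ (sndP v) - phi A₂ (sndP u) := by
        linear_combination (norm := module) h
      rw [this]
      exact sub_mem (phi_mem_subgroup A₂ _) (phi_mem_subgroup A₂ _)
  obtain ⟨k, hk⟩ := AddSubgroup.mem_zmultiples_iff.1 hx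
  refine ⟨k, by rw [hk]; abel, ?_⟩
  have h2 : k • d = phi A₂ (sndP v) - phi A₂ (sndP u) := by
    rw [hk]; linear_combination (norm := module) h
  rw [h2]; abel

theorem k_nonneg
    (hred : ∀ x ∈ AddSubmonoid.closure (Set.range (Fin.append A₁ A₂)),
      -x ∈ AddSubmonoid.closure (Set.range (Fin.append A₁ A₂)) → x = 0)
    (hd0 : d ≠ 0) (hd1 : d ∈ AddSubmonoid.closure (Set.range A₁))
    {k : ℤ} (hk : k • d ∈ AddSubmonoid.closure (Set.range (Fin.append A₁ A₂))) :
    0 ≤ k := by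
  by_contra hc
  push_neg at hc
  have hdS : d ∈ AddSubmonoid.closure (Set.range (Fin.append A₁ A₂)) :=
    AddSubmonoid.closure_mono range_left_subset hd1
  have hneg : -(k • d) ∈ AddSubmonoid.closure (Set.range (Fin.append A₁ A₂)) := by
    have h1 : ((-k).toNat : ℤ) = -k := Int.toNat_of_nonneg (by omega)
    have : -(k • d) = (-k).toNat • d := by
      calc -(k • d) = (-k) • d := (neg_smul k d).symm
        _ = ((-k).toNat : ℤ) • d := by rw [h1]
        _ = (-k).toNat • d := natCast_zsmul d _
    rw [this]
    exact AddSubmonoid.nsmul_mem _ hdS _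
  have := hred _ hk hneg
  rw [smul_eq_zero] at this
  rcases this with h | h
  · omega
  · exact hd0 h

theorem k_unique (hd0 : d ≠ 0) {k k' : ℤ} (h : k • d = k' • d) : k = k' := by
  have : (k - k') • d = 0 := by
    rw [sub_smul, h, sub_self]
  rcases smul_eq_zero.1 this with h | h
  · omega
  · exact absurd h hd0

theorem fiber_decomp_left
    (hglue : AddSubgroup.closure (Set.range A₁) ⊓ AddSubgroup.closure (Set.range A₂)
      = AddSubgroup.zmultiples d)
    (hred : ∀ x ∈ AddSubmonoid.closure (Set.range (Fin.append A₁ A₂)),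
      -x ∈ AddSubmonoid.closure (Set.range (Fin.append A₁ A₂)) → x = 0)
    (hd0 : d ≠ 0) (hd1 : d ∈ AddSubmonoid.closure (Set.range A₁))
    {a : Fin n → ℤ} {u₀ : Fin r₁ → ℕ} (ha : phi A₁ u₀ = a)
    {z : Fin (r₁ + r₂) → ℕ} (hz : phi (Fin.append A₁ A₂) z = a) :
    ∃ k : ℕ, phi A₂ (sndP z) = k • d ∧ phi A₁ (fstP z) = a - k • d := by
  have hv : phi (Fin.append A₁ A₂) (Fin.append u₀ 0) = a := by
    rw [phi_append', phi_zero, add_zero, ha]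
  obtain ⟨k, hk1, hk2⟩ := key_k_lemma hglue (hz.trans hv.symm)
  rw [sndP_append, phi_zero] at hk2
  have hneg : (-k) • d = phi A₂ (sndP z) := by
    rw [neg_smul]; linear_combination (norm := module) hk2
  have hmem : (-k) • d ∈ AddSubmonoid.closure (Set.range (Fin.append A₁ A₂)) := by
    rw [hneg, mem_closure_iff_phi]
    exact ⟨Fin.append 0 (sndP z), by rw [phi_append', phi_zero, zero_add]⟩
  have hnn : 0 ≤ -k := k_nonneg hred hd0 hd1 hmem
  refine ⟨(-k).toNat, ?_, ?_⟩
  · rw [← hneg, ← natCast_zsmul d (-k).toNat, Int.toNat_of_nonneg hnn]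
  · rw [fstP_append, ha] at hk1
    rw [hk1, ← natCast_zsmul d (-k).toNat, Int.toNat_of_nonneg hnn]
    module

theorem fiber_decomp_right
    (hglue : AddSubgroup.closure (Set.range A₁) ⊓ AddSubgroup.closure (Set.range A₂)
      = AddSubgroup.zmultiples d)
    (hred : ∀ x ∈ AddSubmonoid.closure (Set.range (Fin.append A₁ A₂)),
      -x ∈ AddSubmonoid.closure (Set.range (Fin.append A₁ A₂)) → x = 0)
    (hd0 : d ≠ 0) (hd1 : d ∈ AddSubmonoid.closure (Set.range A₁))
    {a : Fin n → ℤ} {v₀ : Fin r₂ → ℕ} (ha : phi A₂ v₀ = a)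
    {z : Fin (r₁ + r₂) → ℕ} (hz : phi (Fin.append A₁ A₂) z = a) :
    ∃ k : ℕ, phi A₁ (fstP z) = k • d ∧ phi A₂ (sndP z) = a - k • d := by
  have hv : phi (Fin.append A₁ A₂) (Fin.append 0 v₀) = a := by
    rw [phi_append', phi_zero, zero_add, ha]
  obtain ⟨k, hk1, hk2⟩ := key_k_lemma hglue (hz.trans hv.symm)
  rw [fstP_append, phi_zero, zero_add] at hk1
  have hmem : k • d ∈ AddSubmonoid.closure (Set.range (Fin.append A₁ A₂)) := by
    rw [← hk1, mem_closure_iff_phi]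
    exact ⟨Fin.append (fstP z) 0, by rw [phi_append', phi_zero, add_zero]⟩
  have hnn : 0 ≤ k := k_nonneg hred hd0 hd1 hmem
  rw [sndP_append, ha] at hk2
  refine ⟨k.toNat, ?_, ?_⟩
  · rw [hk1, ← natCast_zsmul d k.toNat, Int.toNat_of_nonneg hnn]
  · rw [← natCast_zsmul d k.toNat, Int.toNat_of_nonneg hnn, hk2]
    abel

theorem fiber_d_structure
    (hglue : AddSubgroup.closure (Set.range A₁) ⊓ AddSubgroup.closure (Set.range A₂)
      = AddSubgroup.zmultiples d)
    (hred : ∀ x ∈ AddSubmonoid.closure (Set.range (Fin.append A₁ A₂)),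
      -x ∈ AddSubmonoid.closure (Set.range (Fin.append A₁ A₂)) → x = 0)
    (hd0 : d ≠ 0) (hd1 : d ∈ AddSubmonoid.closure (Set.range A₁))
    (h0 : ∀ t, phi (Fin.append A₁ A₂) t = 0 → t = 0)
    {lam : Fin r₁ → ℕ} (hlam : phi A₁ lam = d)
    {z : Fin (r₁ + r₂) → ℕ} (hz : phi (Fin.append A₁ A₂) z = d) :
    (sndP z = 0 ∧ phi A₁ (fstP z) = d) ∨ (fstP z = 0 ∧ phi A₂ (sndP z) = d) := by
  obtain ⟨k, hk1, hk2⟩ := fiber_decomp_left hglue hred hd0 hd1 hlam hz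
  have hmem : ((1 : ℤ) - k) • d ∈ AddSubmonoid.closure (Set.range (Fin.append A₁ A₂)) := by
    have : ((1 : ℤ) - k) • d = phi A₁ (fstP z) := by
      rw [hk2, ← natCast_zsmul d k]
      rw [sub_smul, one_smul]
    rw [this, mem_closure_iff_phi]
    exact ⟨Fin.append (fstP z) 0, by rw [phi_append', phi_zero, add_zero]⟩
  have hle : k ≤ 1 := by
    have := k_nonneg hred hd0 hd1 hmem
    omega
  interval_cases k
  · left
    constructor
    · exact phi2_eq_zero_imp h0 _ (by simpa using hk1)
    · simpa using hk2
  · right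
    constructor
    · apply phi1_eq_zero_imp h0
      rw [hk2, one_smul, sub_self]
    · simpa using hk1

theorem rrel_d_snd_zero
    (hglue : AddSubgroup.closure (Set.range A₁) ⊓ AddSubgroup.closure (Set.range A₂)
      = AddSubgroup.zmultiples d)
    (hred : ∀ x ∈ AddSubmonoid.closure (Set.range (Fin.append A₁ A₂)),
      -x ∈ AddSubmonoid.closure (Set.range (Fin.append A₁ A₂)) → x = 0)
    (hd0 : d ≠ 0) (hd1 : d ∈ AddSubmonoid.closure (Set.range A₁))
    (h0 : ∀ t, phi (Fin.append A₁ A₂) t = 0 → t = 0)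
    {lam : Fin r₁ → ℕ} (hlam : phi A₁ lam = d)
    {z w : Fin (r₁ + r₂) → ℕ} (hz : sndP z = 0)
    (h : Rrel (Fin.append A₁ A₂) d z w) : sndP w = 0 := by
  induction h with
  | refl => exact hz
  | tail _ hstep ih =>
    rcases fiber_d_structure hglue hred hd0 hd1 h0 hlam hstep.2.1 with h1 | h1
    · exact h1.1
    · exfalso
      apply hstep.2.2
      rw [dot_split]
      rw [Finset.sum_eq_zero, Finset.sum_eq_zero, add_zero]
      · intro i _; rw [ih, Pi.zero_apply, zero_mul]
      · intro i _; rw [h1.1, Pi.zero_apply, mul_zero]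

theorem d_isBetti
    (hglue : AddSubgroup.closure (Set.range A₁) ⊓ AddSubgroup.closure (Set.range A₂)
      = AddSubgroup.zmultiples d)
    (hred : ∀ x ∈ AddSubmonoid.closure (Set.range (Fin.append A₁ A₂)),
      -x ∈ AddSubmonoid.closure (Set.range (Fin.append A₁ A₂)) → x = 0)
    (hd0 : d ≠ 0) (hd1 : d ∈ AddSubmonoid.closure (Set.range A₁))
    (h0 : ∀ t, phi (Fin.append A₁ A₂) t = 0 → t = 0)
    {lam : Fin r₁ → ℕ} (hlam : phi A₁ lam = d)
    {mu : Fin r₂ → ℕ} (hmu : phi A₂ mu = d) :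
    ¬ Rrel (Fin.append A₁ A₂) d (Fin.append lam 0) (Fin.append 0 mu) := by
  intro h
  have := rrel_d_snd_zero hglue hred hd0 hd1 h0 hlam (by rw [sndP_append]) h
  rw [sndP_append] at this
  apply hd0
  rw [← hmu, this, phi_zero]

theorem proj_left
    (hglue : AddSubgroup.closure (Set.range A₁) ⊓ AddSubgroup.closure (Set.range A₂)
      = AddSubgroup.zmultiples d)
    (hred : ∀ x ∈ AddSubmonoid.closure (Set.range (Fin.append A₁ A₂)),
      -x ∈ AddSubmonoid.closure (Set.range (Fin.append A₁ A₂)) → x = 0)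
    (hd0 : d ≠ 0) (hd1 : d ∈ AddSubmonoid.closure (Set.range A₁))
    (h0 : ∀ t, phi (Fin.append A₁ A₂) t = 0 → t = 0)
    {a : Fin n → ℤ} {u₀ : Fin r₁ → ℕ} (ha : phi A₁ u₀ = a)
    {lam : Fin r₁ → ℕ} (hlam : phi A₁ lam = d)
    {z z' : Fin (r₁ + r₂) → ℕ} (h : Rrel (Fin.append A₁ A₂) a z z')
    {k : ℕ} (hk : phi A₂ (sndP z) = k • d) :
    ∀ k' : ℕ, phi A₂ (sndP z') = k' • d →
      Rrel A₁ a (fstP z + k • lam) (fstP z' + k' • lam) := by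
  have hlamne : lam ≠ 0 := by
    intro hc; apply hd0; rw [← hlam, hc, phi_zero]
  have hmem : ∀ (w : Fin (r₁ + r₂) → ℕ) (kw : ℕ), phi (Fin.append A₁ A₂) w = a →
      phi A₂ (sndP w) = kw • d → phi A₁ (fstP w + kw • lam) = a := by
    intro w kw hw hkw
    rw [phi_add, phi_nsmul, hlam]
    rw [phi_append, hkw] at hw
    exact hw
  induction h with
  | refl =>
    intro k' hk'
    have : k = k' := by
      have h1 : ((k : ℤ)) • d = ((k' : ℤ)) • d := by
        rw [natCast_zsmul, natCast_zsmul, ← hk, ← hk']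
      exact_mod_cast k_unique hd0 h1
    subst this
    exact .refl
  | tail hrel hstep ih =>
    intro k' hk'
    rename_i b c
    obtain ⟨kb, hkb1, _⟩ := fiber_decomp_left hglue hred hd0 hd1 ha hstep.1
    refine (ih kb hkb1).tail ⟨hmem b kb hstep.1 hkb1, hmem c k' hstep.2.1 hk', ?_⟩
    have hdot := hstep.2.2
    rw [dot_split] at hdot
    have hcase : (∑ i, fstP b i * fstP c i) ≠ 0 ∨ (∑ i, sndP b i * sndP c i) ≠ 0 := by
      by_contra hcon
      push_neg at hcon
      rw [hcon.1, hcon.2] at hdot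
      exact hdot rfl
    rw [dot_ne_zero_iff]
    rcases hcase with hc1 | hc2
    · obtain ⟨i, hi1, hi2⟩ := (dot_ne_zero_iff _ _).1 hc1
      refine ⟨i, ?_, ?_⟩ <;>
        · simp only [Pi.add_apply, Pi.smul_apply, smul_eq_mul]
          omega
    · obtain ⟨j, hj1, hj2⟩ := (dot_ne_zero_iff _ _).1 hc2
      have hkbne : kb ≠ 0 := by
        rintro rfl
        rw [zero_smul] at hkb1
        have := phi2_eq_zero_imp h0 _ hkb1
        rw [this] at hj1
        exact hj1 rfl
      have hk'ne : k' ≠ 0 := by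
        rintro rfl
        rw [zero_smul] at hk'
        have := phi2_eq_zero_imp h0 _ hk'
        rw [this] at hj2
        exact hj2 rfl
      have : ∃ i, lam i ≠ 0 := by
        by_contra hcon; push_neg at hcon
        exact hlamne (funext hcon)
      obtain ⟨i, hla⟩ := this
      refine ⟨i, ?_, ?_⟩
      · have h5 : kb * lam i ≠ 0 := Nat.mul_ne_zero hkbne hla
        simp only [Pi.add_apply, Pi.smul_apply, smul_eq_mul]
        omega
      · have h5 : k' * lam i ≠ 0 := Nat.mul_ne_zero hk'ne hla
        simp only [Pi.add_apply, Pi.smul_apply, smul_eq_mul]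
        omega

theorem proj_right
    (hglue : AddSubgroup.closure (Set.range A₁) ⊓ AddSubgroup.closure (Set.range A₂)
      = AddSubgroup.zmultiples d)
    (hred : ∀ x ∈ AddSubmonoid.closure (Set.range (Fin.append A₁ A₂)),
      -x ∈ AddSubmonoid.closure (Set.range (Fin.append A₁ A₂)) → x = 0)
    (hd0 : d ≠ 0) (hd1 : d ∈ AddSubmonoid.closure (Set.range A₁))
    (h0 : ∀ t, phi (Fin.append A₁ A₂) t = 0 → t = 0)
    {a : Fin n → ℤ} {v₀ : Fin r₂ → ℕ} (ha : phi A₂ v₀ = a)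
    {mu : Fin r₂ → ℕ} (hmu : phi A₂ mu = d)
    {z z' : Fin (r₁ + r₂) → ℕ} (h : Rrel (Fin.append A₁ A₂) a z z')
    {k : ℕ} (hk : phi A₁ (fstP z) = k • d) :
    ∀ k' : ℕ, phi A₁ (fstP z') = k' • d →
      Rrel A₂ a (sndP z + k • mu) (sndP z' + k' • mu) := by
  have hmune : mu ≠ 0 := by
    intro hc; apply hd0; rw [← hmu, hc, phi_zero]
  have hmem : ∀ (w : Fin (r₁ + r₂) → ℕ) (kw : ℕ), phi (Fin.append A₁ A₂) w = a →
      phi A₁ (fstP w) = kw • d → phi A₂ (sndP w + kw • mu) = a := by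
    intro w kw hw hkw
    rw [phi_add, phi_nsmul, hmu]
    rw [phi_append, hkw] at hw
    rw [add_comm]
    exact hw
  induction h with
  | refl =>
    intro k' hk'
    have : k = k' := by
      have h1 : ((k : ℤ)) • d = ((k' : ℤ)) • d := by
        rw [natCast_zsmul, natCast_zsmul, ← hk, ← hk']
      exact_mod_cast k_unique hd0 h1
    subst this
    exact .refl
  | tail hrel hstep ih =>
    intro k' hk'
    rename_i b c
    obtain ⟨kb, hkb1, _⟩ := fiber_decomp_right hglue hred hd0 hd1 ha hstep.1
    refine (ih kb hkb1).tail ⟨hmem b kb hstep.1 hkb1, hmem c k' hstep.2.1 hk', ?_⟩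
    have hdot := hstep.2.2
    rw [dot_split] at hdot
    have hcase : (∑ i, fstP b i * fstP c i) ≠ 0 ∨ (∑ i, sndP b i * sndP c i) ≠ 0 := by
      by_contra hcon
      push_neg at hcon
      rw [hcon.1, hcon.2] at hdot
      exact hdot rfl
    rw [dot_ne_zero_iff]
    rcases hcase with hc1 | hc2
    · obtain ⟨j, hj1, hj2⟩ := (dot_ne_zero_iff _ _).1 hc1
      have hkbne : kb ≠ 0 := by
        rintro rfl
        rw [zero_smul] at hkb1
        have := phi1_eq_zero_imp h0 _ hkb1
        rw [this] at hj1
        exact hj1 rfl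
      have hk'ne : k' ≠ 0 := by
        rintro rfl
        rw [zero_smul] at hk'
        have := phi1_eq_zero_imp h0 _ hk'
        rw [this] at hj2
        exact hj2 rfl
      have : ∃ i, mu i ≠ 0 := by
        by_contra hcon; push_neg at hcon
        exact hmune (funext hcon)
      obtain ⟨i, hla⟩ := this
      refine ⟨i, ?_, ?_⟩
      · have h5 : kb * mu i ≠ 0 := Nat.mul_ne_zero hkbne hla
        simp only [Pi.add_apply, Pi.smul_apply, smul_eq_mul]
        omega
      · have h5 : k' * mu i ≠ 0 := Nat.mul_ne_zero hk'ne hla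
        simp only [Pi.add_apply, Pi.smul_apply, smul_eq_mul]
        omega
    · obtain ⟨i, hi1, hi2⟩ := (dot_ne_zero_iff _ _).1 hc2
      refine ⟨i, ?_, ?_⟩ <;>
        · simp only [Pi.add_apply, Pi.smul_apply, smul_eq_mul]
          omega

theorem exists_ne_zero {s : ℕ} {f : Fin s → ℕ} (h : f ≠ 0) : ∃ i, f i ≠ 0 := by
  by_contra hc; push_neg at hc
  exact h (funext hc)

theorem step_of_fst_common {A₁ : Fin r₁ → M} {A₂ : Fin r₂ → M} {a : M}
    {x x' : Fin r₁ → ℕ} {y y' : Fin r₂ → ℕ}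
    (h1 : phi (Fin.append A₁ A₂) (Fin.append x y) = a)
    (h2 : phi (Fin.append A₁ A₂) (Fin.append x' y') = a)
    {i : Fin r₁} (hi : x i ≠ 0) (hi' : x' i ≠ 0) :
    step (Fin.append A₁ A₂) a (Fin.append x y) (Fin.append x' y') := by
  refine ⟨h1, h2, ?_⟩
  rw [dot_append]
  have h3 : (∑ i, x i * x' i) ≠ 0 := (dot_ne_zero_iff _ _).2 ⟨i, hi, hi'⟩
  omega

theorem step_of_snd_common {A₁ : Fin r₁ → M} {A₂ : Fin r₂ → M} {a : M}
    {x x' : Fin r₁ → ℕ} {y y' : Fin r₂ → ℕ}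
    (h1 : phi (Fin.append A₁ A₂) (Fin.append x y) = a)
    (h2 : phi (Fin.append A₁ A₂) (Fin.append x' y') = a)
    {j : Fin r₂} (hj : y j ≠ 0) (hj' : y' j ≠ 0) :
    step (Fin.append A₁ A₂) a (Fin.append x y) (Fin.append x' y') := by
  refine ⟨h1, h2, ?_⟩
  rw [dot_append]
  have h3 : (∑ j, y j * y' j) ≠ 0 := (dot_ne_zero_iff _ _).2 ⟨j, hj, hj'⟩
  omega

theorem bridge
    (hglue : AddSubgroup.closure (Set.range A₁) ⊓ AddSubgroup.closure (Set.range A₂)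
      = AddSubgroup.zmultiples d)
    (hred : ∀ x ∈ AddSubmonoid.closure (Set.range (Fin.append A₁ A₂)),
      -x ∈ AddSubmonoid.closure (Set.range (Fin.append A₁ A₂)) → x = 0)
    (hd0 : d ≠ 0) (hd1 : d ∈ AddSubmonoid.closure (Set.range A₁))
    (h0 : ∀ t, phi (Fin.append A₁ A₂) t = 0 → t = 0)
    {lam : Fin r₁ → ℕ} (hlam : phi A₁ lam = d)
    {mu : Fin r₂ → ℕ} (hmu : phi A₂ mu = d)
    (hcond : ∀ a : Fin n → ℤ, (IsBetti A₁ a ∨ IsBetti A₂ a) →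
      d - a ∉ AddSubmonoid.closure (Set.range (Fin.append A₁ A₂)) ∧
      a - d ∉ AddSubmonoid.closure (Set.range (Fin.append A₁ A₂)))
    {a : Fin n → ℤ} {z z' : Fin (r₁ + r₂) → ℕ}
    (hz : phi (Fin.append A₁ A₂) z = a) (hz' : phi (Fin.append A₁ A₂) z' = a)
    (hdiff : phi A₁ (fstP z) = phi A₁ (fstP z') + d) :
    a = d ∨ Rrel (Fin.append A₁ A₂) a z z' := by
  have hzs := hz
  have hz's := hz'
  rw [phi_append] at hzs hz's
  have hsnd : phi A₂ (sndP z') = phi A₂ (sndP z) + d := by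
    linear_combination (norm := module) hz's - hzs + hdiff
  -- the two bridging factorizations
  have hp : phi (Fin.append A₁ A₂) (Fin.append (fstP z' + lam) (sndP z)) = a := by
    rw [phi_append', phi_add, hlam, ← hdiff]; exact hzs
  have hq : phi (Fin.append A₁ A₂) (Fin.append (fstP z') (sndP z + mu)) = a := by
    rw [phi_append', phi_add, hmu, ← hsnd]; exact hz's
  by_cases hc : fstP z' = 0 ∧ sndP z = 0
  · -- a = d
    left
    rw [← hz, ← append_parts z, phi_append', hc.2, phi_zero, add_zero, hdiff, hc.1,
      phi_zero, zero_add]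
  · -- z ~ p ~ q ~ z'
    right
    -- z ~ p
    have hzp : Rrel (Fin.append A₁ A₂) a z (Fin.append (fstP z' + lam) (sndP z)) := by
      by_cases hsz : sndP z = 0
      · -- pure case; uses the condition
        have haS1 : phi A₁ (fstP z) = a := by
          have h7 : phi (Fin.append A₁ A₂) (Fin.append (fstP z) (0 : Fin r₂ → ℕ)) = a := by
            rw [← hsz, append_parts z]; exact hz
          rw [phi_append', phi_zero, add_zero] at h7; exact h7
        have hnB : ¬ IsBetti A₁ a := by
          intro hB
          apply (hcond a (Or.inl hB)).2
          have : a - d = phi A₁ (fstP z') := by rw [← haS1, hdiff]; abel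
          rw [this, mem_closure_iff_phi]
          exact ⟨Fin.append (fstP z') 0, by rw [phi_append', phi_zero, add_zero]⟩
        have h5 : Rrel A₁ a (fstP z) (fstP z' + lam) := by
          apply not_isBetti_rel hnB haS1
          rw [phi_add, hlam, ← hdiff, haS1]
        have := lift_left' (A₂ := A₂) h5
        rw [← hsz] at this
        rwa [append_parts z] at this
      · obtain ⟨j, hj⟩ := exists_ne_zero hsz
        refine Relation.ReflTransGen.single ?_
        have hstep := step_of_snd_common (A₁ := A₁) (A₂ := A₂) (x := fstP z)
          (x' := fstP z' + lam) (y := sndP z) (y' := sndP z)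
          (by rw [append_parts z]; exact hz) hp hj hj
        rwa [append_parts z] at hstep
    -- q ~ z'
    have hqz' : Rrel (Fin.append A₁ A₂) a (Fin.append (fstP z') (sndP z + mu)) z' := by
      by_cases hfz' : fstP z' = 0
      · have haS2 : phi A₂ (sndP z') = a := by
          have h7 : phi (Fin.append A₁ A₂) (Fin.append (0 : Fin r₁ → ℕ) (sndP z')) = a := by
            rw [← hfz', append_parts z']; exact hz'
          rw [phi_append', phi_zero, zero_add] at h7; exact h7
        have hnB : ¬ IsBetti A₂ a := by
          intro hB
          apply (hcond a (Or.inr hB)).2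
          have : a - d = phi A₂ (sndP z) := by rw [← haS2, hsnd]; abel
          rw [this, mem_closure_iff_phi]
          exact ⟨Fin.append 0 (sndP z), by rw [phi_append', phi_zero, zero_add]⟩
        have h5 : Rrel A₂ a (sndP z + mu) (sndP z') := by
          apply not_isBetti_rel hnB _ haS2
          rw [phi_add, hmu, ← hsnd, haS2]
        have := lift_right' (A₁ := A₁) h5
        rw [← hfz'] at this
        rwa [append_parts z'] at this
      · obtain ⟨i, hi⟩ := exists_ne_zero hfz'
        refine Relation.ReflTransGen.single ?_
        have hstep := step_of_fst_common (A₁ := A₁) (A₂ := A₂) (x := fstP z')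
          (x' := fstP z') (y := sndP z + mu) (y' := sndP z')
          hq (by rw [append_parts z']; exact hz') hi hi
        rwa [append_parts z'] at hstep
    -- p ~ q
    have hpq : step (Fin.append A₁ A₂) a (Fin.append (fstP z' + lam) (sndP z))
        (Fin.append (fstP z') (sndP z + mu)) := by
      rcases not_and_or.1 hc with hfz' | hsz
      · obtain ⟨i, hi⟩ := exists_ne_zero hfz'
        exact step_of_fst_common hp hq (by simp only [Pi.add_apply]; omega) hi
      · obtain ⟨j, hj⟩ := exists_ne_zero hsz
        exact step_of_snd_common hp hq hj (by simp only [Pi.add_apply]; omega)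
    exact (hzp.tail hpq).trans hqz'

theorem conn
    (hglue : AddSubgroup.closure (Set.range A₁) ⊓ AddSubgroup.closure (Set.range A₂)
      = AddSubgroup.zmultiples d)
    (hred : ∀ x ∈ AddSubmonoid.closure (Set.range (Fin.append A₁ A₂)),
      -x ∈ AddSubmonoid.closure (Set.range (Fin.append A₁ A₂)) → x = 0)
    (hd0 : d ≠ 0) (hd1 : d ∈ AddSubmonoid.closure (Set.range A₁))
    (h0 : ∀ t, phi (Fin.append A₁ A₂) t = 0 → t = 0)
    {lam : Fin r₁ → ℕ} (hlam : phi A₁ lam = d)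
    {mu : Fin r₂ → ℕ} (hmu : phi A₂ mu = d)
    (hcond : ∀ a : Fin n → ℤ, (IsBetti A₁ a ∨ IsBetti A₂ a) →
      d - a ∉ AddSubmonoid.closure (Set.range (Fin.append A₁ A₂)) ∧
      a - d ∉ AddSubmonoid.closure (Set.range (Fin.append A₁ A₂))) :
    ∀ (k : ℕ) {a : Fin n → ℤ} {z z' : Fin (r₁ + r₂) → ℕ},
      phi (Fin.append A₁ A₂) z = a → phi (Fin.append A₁ A₂) z' = a →
      phi A₁ (fstP z) = phi A₁ (fstP z') + (k + 1) • d →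
      a = d ∨ Rrel (Fin.append A₁ A₂) a z z' := by
  intro k
  induction k with
  | zero =>
    intro a z z' hz hz' hdiff
    rw [show ((0:ℕ)+1) = 1 from rfl, one_smul] at hdiff
    exact bridge hglue hred hd0 hd1 h0 hlam hmu hcond hz hz' hdiff
  | succ k ih =>
    intro a z z' hz hz' hdiff
    set w := Fin.append (fstP z' + (k + 1) • lam) (sndP z + mu) with hw_def
    have hfw : phi A₁ (fstP w) = phi A₁ (fstP z') + (k + 1) • d := by
      rw [hw_def, fstP_append, phi_add, phi_nsmul, hlam]
    have hzz := hz
    rw [phi_append] at hzz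
    rw [succ_nsmul] at hdiff
    have hphiw : phi (Fin.append A₁ A₂) w = a := by
      rw [hw_def, phi_append', phi_add, phi_nsmul, hlam, phi_add, hmu]
      linear_combination (norm := module) hzz - hdiff
    have hdiffzw : phi A₁ (fstP z) = phi A₁ (fstP w) + d := by
      rw [hfw]
      linear_combination (norm := module) hdiff
    rcases ih hphiw hz' hfw with h | h
    · exact Or.inl h
    rcases bridge hglue hred hd0 hd1 h0 hlam hmu hcond hz hphiw hdiffzw with h' | h'
    · exact Or.inl h'
    · exact Or.inr (h'.trans h)

end Glue


/-- If `S` is the gluing of `S₁` and `S₂` with `G(S₁) ∩ G(S₂) = dℤ`, then `S` is uniquely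
presented iff `S₁` and `S₂` are uniquely presented and `±(d - a) ∉ S` for every
`a ∈ Betti(S₁) ∪ Betti(S₂)`. -/
theorem stmt9 {n r₁ r₂ : ℕ} (A₁ : Fin r₁ → (Fin n → ℤ)) (A₂ : Fin r₂ → (Fin n → ℤ))
    (hdisj : Disjoint (Set.range A₁) (Set.range A₂))
    (hmin : ∀ i : Fin (r₁ + r₂), ¬ ∃ u : Fin (r₁ + r₂) → ℕ,
      u i = 0 ∧ phi (Fin.append A₁ A₂) u = Fin.append A₁ A₂ i)
    (hred : ∀ x ∈ AddSubmonoid.closure (Set.range (Fin.append A₁ A₂)),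
      -x ∈ AddSubmonoid.closure (Set.range (Fin.append A₁ A₂)) → x = 0)
    (d : Fin n → ℤ) (hd0 : d ≠ 0)
    (hd1 : d ∈ AddSubmonoid.closure (Set.range A₁))
    (hd2 : d ∈ AddSubmonoid.closure (Set.range A₂))
    (hglue : AddSubgroup.closure (Set.range A₁) ⊓ AddSubgroup.closure (Set.range A₂)
      = AddSubgroup.zmultiples d) :
    UniquelyPresented (Fin.append A₁ A₂) ↔
      (UniquelyPresented A₁ ∧ UniquelyPresented A₂ ∧
        ∀ a : Fin n → ℤ, (IsBetti A₁ a ∨ IsBetti A₂ a) →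
          d - a ∉ AddSubmonoid.closure (Set.range (Fin.append A₁ A₂)) ∧
          a - d ∉ AddSubmonoid.closure (Set.range (Fin.append A₁ A₂))) := by
  have h0 : ∀ t, phi (Fin.append A₁ A₂) t = 0 → t = 0 := phi_eq_zero_imp hmin hred
  have h01 := phi1_eq_zero_imp (A₂ := A₂) h0
  have h02 := phi2_eq_zero_imp (A₁ := A₁) h0
  obtain ⟨lam, hlam⟩ := (mem_closure_iff_phi A₁ d).1 hd1
  obtain ⟨mu, hmu⟩ := (mem_closure_iff_phi A₂ d).1 hd2
  have hlam0 : lam ≠ 0 := fun hc => hd0 (by rw [← hlam, hc, phi_zero])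
  have hmu0 : mu ≠ 0 := fun hc => hd0 (by rw [← hmu, hc, phi_zero])
  have hphiE1 : ∀ u : Fin r₁ → ℕ,
      phi (Fin.append A₁ A₂) (Fin.append u 0) = phi A₁ u := fun u => by
    rw [phi_append', phi_zero, add_zero]
  have hphiE2 : ∀ v : Fin r₂ → ℕ,
      phi (Fin.append A₁ A₂) (Fin.append 0 v) = phi A₂ v := fun v => by
    rw [phi_append', phi_zero, zero_add]
  have he1inj : ∀ u u' : Fin r₁ → ℕ,
      Fin.append u (0 : Fin r₂ → ℕ) = Fin.append u' 0 → u = u' := by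
    intro u u' h; rw [← fstP_append u (0 : Fin r₂ → ℕ), h, fstP_append]
  have he2inj : ∀ v v' : Fin r₂ → ℕ,
      Fin.append (0 : Fin r₁ → ℕ) v = Fin.append (0 : Fin r₁ → ℕ) v' → v = v' := by
    intro v v' h; rw [← sndP_append (0 : Fin r₁ → ℕ) v, h, sndP_append]
  have hfibl : phi (Fin.append A₁ A₂) (Fin.append lam 0) = d := by rw [hphiE1, hlam]
  have hfibm : phi (Fin.append A₁ A₂) (Fin.append 0 mu) = d := by rw [hphiE2, hmu]
  have pairmem : ∀ (x y : Fin (r₁ + r₂) → ℕ) (b : Fin n → ℤ),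
      {w : Fin (r₁ + r₂) → ℕ | phi (Fin.append A₁ A₂) w = b} = {x, y} →
      ∀ t, phi (Fin.append A₁ A₂) t = b ↔ (t = x ∨ t = y) := by
    intro x y b hf t
    have h1 : (phi (Fin.append A₁ A₂) t = b) ↔
        t ∈ {w : Fin (r₁ + r₂) → ℕ | phi (Fin.append A₁ A₂) w = b} := Iff.rfl
    rw [h1, hf]
    simp
  constructor
  · -- forward direction
    intro hUP
    have hBd : IsBetti (Fin.append A₁ A₂) d :=
      ⟨_, _, hfibl, hfibm, d_isBetti hglue hred hd0 hd1 h0 hlam hmu⟩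
    obtain ⟨xd, yd, hxyd, hfibd, hdotd⟩ := hUP d hBd
    have hmemd := pairmem xd yd d hfibd
    have hcontr : ∀ u : Fin r₁ → ℕ,
        Fin.append (0 : Fin r₁ → ℕ) mu = Fin.append u (0 : Fin r₂ → ℕ) → False := by
      intro u h
      apply hmu0
      rw [← sndP_append (0 : Fin r₁ → ℕ) mu, h, sndP_append]
    have hcontr2 : ∀ v : Fin r₂ → ℕ,
        Fin.append lam (0 : Fin r₂ → ℕ) = Fin.append (0 : Fin r₁ → ℕ) v → False := by
      intro v h
      apply hlam0
      rw [← fstP_append lam (0 : Fin r₂ → ℕ), h, fstP_append]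
    have hZ1 : ∀ w, phi A₁ w = d → w = lam := by
      intro w hw
      by_contra hne
      have hwl : Fin.append w (0 : Fin r₂ → ℕ) ≠ Fin.append lam 0 :=
        fun h => hne (he1inj _ _ h)
      have m1 := (hmemd _).1 (by rw [hphiE1, hw])
      have m2 := (hmemd _).1 hfibl
      have m3 := (hmemd _).1 hfibm
      rcases m1 with h1 | h1 <;> rcases m2 with h2 | h2 <;> rcases m3 with h3 | h3 <;>
        first
        | exact hwl (h1.trans h2.symm)
        | exact hcontr w (h3.trans h1.symm)
        | exact hcontr lam (h3.trans h2.symm)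
    have hZ2 : ∀ w, phi A₂ w = d → w = mu := by
      intro w hw
      by_contra hne
      have hwm : Fin.append (0 : Fin r₁ → ℕ) w ≠ Fin.append 0 mu :=
        fun h => hne (he2inj _ _ h)
      have m1 := (hmemd _).1 (by rw [hphiE2, hw])
      have m2 := (hmemd _).1 hfibm
      have m3 := (hmemd _).1 hfibl
      rcases m1 with h1 | h1 <;> rcases m2 with h2 | h2 <;> rcases m3 with h3 | h3 <;>
        first
        | exact hwm (h1.trans h2.symm)
        | exact hcontr2 w (h3.trans h1.symm)
        | exact hcontr2 mu (h3.trans h2.symm)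
    have main1 : ∀ a, IsBetti A₁ a → HasUniquePres A₁ a ∧
        (d - a ∉ AddSubmonoid.closure (Set.range (Fin.append A₁ A₂))) ∧
        (a - d ∉ AddSubmonoid.closure (Set.range (Fin.append A₁ A₂))) := by
      intro a hB
      obtain ⟨u, v, hu, hv, hnR1⟩ := hB
      have huv : u ≠ v := fun h => hnR1 (h ▸ Relation.ReflTransGen.refl)
      have huv' : Fin.append u (0 : Fin r₂ → ℕ) ≠ Fin.append v 0 :=
        fun h => huv (he1inj _ _ h)
      have hnR : ¬ Rrel (Fin.append A₁ A₂) a (Fin.append u 0) (Fin.append v 0) := by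
        intro h
        apply hnR1
        have hku : phi A₂ (sndP (Fin.append u (0 : Fin r₂ → ℕ))) = (0 : ℕ) • d := by
          rw [sndP_append, phi_zero, zero_smul]
        have hkv : phi A₂ (sndP (Fin.append v (0 : Fin r₂ → ℕ))) = (0 : ℕ) • d := by
          rw [sndP_append, phi_zero, zero_smul]
        have := proj_left hglue hred hd0 hd1 h0 hu hlam h hku 0 hkv
        simpa [fstP_append] using this
      have hBa : IsBetti (Fin.append A₁ A₂) a :=
        ⟨_, _, by rw [hphiE1, hu], by rw [hphiE1, hv], hnR⟩
      obtain ⟨x, y, hxy, hfib, hdot⟩ := hUP a hBa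
      have hmema := pairmem x y a hfib
      have hmx := (hmema _).1 (by rw [hphiE1, hu])
      have hmy := (hmema _).1 (by rw [hphiE1, hv])
      have hfib2 : ∀ t, phi (Fin.append A₁ A₂) t = a ↔
          (t = Fin.append u 0 ∨ t = Fin.append v 0) := by
        intro t
        rw [hmema t]
        rcases hmx with h1 | h1 <;> rcases hmy with h2 | h2 <;>
          first
          | exact absurd (h1.trans h2.symm) huv'
          | (rw [← h1, ← h2]; try tauto)
      have hdot' : (∑ i, Fin.append u (0 : Fin r₂ → ℕ) i * Fin.append v 0 i) = 0 := by
        rcases hmx with h1 | h1 <;> rcases hmy with h2 | h2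
        · exact absurd (h1.trans h2.symm) huv'
        · rw [h1, h2]; exact hdot
        · rw [h1, h2, dot_comm]; exact hdot
        · exact absurd (h1.trans h2.symm) huv'
      have hdot1 : (∑ i, u i * v i) = 0 := by
        rw [dot_append] at hdot'
        omega
      refine ⟨⟨u, v, huv, ?_, hdot1⟩, ?_, ?_⟩
      · ext w
        simp only [Set.mem_setOf_eq, Set.mem_insert_iff, Set.mem_singleton_iff]
        constructor
        · intro hw
          rcases (hfib2 (Fin.append w 0)).1 (by rw [hphiE1, hw]) with h | h
          · exact Or.inl (he1inj _ _ h)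
          · exact Or.inr (he1inj _ _ h)
        · rintro (rfl | rfl)
          · exact hu
          · exact hv
      · intro hmem
        obtain ⟨w, hw⟩ := (mem_closure_iff_phi _ _).1 hmem
        have hw2 := hw
        rw [phi_append] at hw2
        have hW : phi (Fin.append A₁ A₂) (Fin.append (u + fstP w) (sndP w)) = d := by
          rw [phi_append', phi_add, hu]
          linear_combination (norm := module) hw2
        rcases fiber_d_structure hglue hred hd0 hd1 h0 hlam hW with ⟨hs0, hfd⟩ | ⟨hf0, hsd⟩
        · rw [fstP_append] at hfd
          have hfd' : phi A₁ (v + fstP w) = d := by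
            rw [phi_add, hv]
            rw [phi_add, hu] at hfd
            exact hfd
          have e1 := hZ1 _ hfd
          have e2 := hZ1 _ hfd'
          exact huv (add_right_cancel (e1.trans e2.symm))
        · rw [fstP_append] at hf0
          have hu0 : u = 0 := by
            funext i
            have := congrFun hf0 i
            simp only [Pi.add_apply, Pi.zero_apply] at this ⊢
            omega
          have ha0 : a = 0 := by rw [← hu, hu0, phi_zero]
          have hv0 : v = 0 := h01 v (by rw [hv, ha0])
          exact huv (hu0.trans hv0.symm)
      · intro hmem
        obtain ⟨w, hw⟩ := (mem_closure_iff_phi _ _).1 hmem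
        have ht : phi (Fin.append A₁ A₂) (w + Fin.append (0 : Fin r₁ → ℕ) mu) = a := by
          rw [phi_add, hw, hphiE2, hmu]
          abel
        have hsnd0 : sndP (w + Fin.append (0 : Fin r₁ → ℕ) mu) = sndP w + mu := by
          funext j
          simp [sndP, Fin.append_right]
        have hmuzero : ∀ w' : Fin r₂ → ℕ, sndP w + mu = w' → w' = 0 → False := by
          intro w' hw' hw'0
          apply hmu0
          funext j
          have := congrFun (hw'.trans hw'0) j
          simp only [Pi.add_apply, Pi.zero_apply] at this ⊢
          omega
        rcases (hfib2 _).1 ht with h | h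
        · have := congrArg sndP h
          rw [hsnd0, sndP_append] at this
          exact hmuzero _ this rfl
        · have := congrArg sndP h
          rw [hsnd0, sndP_append] at this
          exact hmuzero _ this rfl
    have main2 : ∀ a, IsBetti A₂ a → HasUniquePres A₂ a ∧
        (d - a ∉ AddSubmonoid.closure (Set.range (Fin.append A₁ A₂))) ∧
        (a - d ∉ AddSubmonoid.closure (Set.range (Fin.append A₁ A₂))) := by
      intro a hB
      obtain ⟨u, v, hu, hv, hnR2⟩ := hB
      have huv : u ≠ v := fun h => hnR2 (h ▸ Relation.ReflTransGen.refl)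
      have huv' : Fin.append (0 : Fin r₁ → ℕ) u ≠ Fin.append 0 v :=
        fun h => huv (he2inj _ _ h)
      have hnR : ¬ Rrel (Fin.append A₁ A₂) a (Fin.append 0 u) (Fin.append 0 v) := by
        intro h
        apply hnR2
        have hku : phi A₁ (fstP (Fin.append (0 : Fin r₁ → ℕ) u)) = (0 : ℕ) • d := by
          rw [fstP_append, phi_zero, zero_smul]
        have hkv : phi A₁ (fstP (Fin.append (0 : Fin r₁ → ℕ) v)) = (0 : ℕ) • d := by
          rw [fstP_append, phi_zero, zero_smul]
        have := proj_right hglue hred hd0 hd1 h0 hu hmu h hku 0 hkv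
        simpa [sndP_append] using this
      have hBa : IsBetti (Fin.append A₁ A₂) a :=
        ⟨_, _, by rw [hphiE2, hu], by rw [hphiE2, hv], hnR⟩
      obtain ⟨x, y, hxy, hfib, hdot⟩ := hUP a hBa
      have hmema := pairmem x y a hfib
      have hmx := (hmema _).1 (by rw [hphiE2, hu])
      have hmy := (hmema _).1 (by rw [hphiE2, hv])
      have hfib2 : ∀ t, phi (Fin.append A₁ A₂) t = a ↔
          (t = Fin.append (0 : Fin r₁ → ℕ) u ∨ t = Fin.append (0 : Fin r₁ → ℕ) v) := by
        intro t
        rw [hmema t]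
        rcases hmx with h1 | h1 <;> rcases hmy with h2 | h2 <;>
          first
          | exact absurd (h1.trans h2.symm) huv'
          | (rw [← h1, ← h2]; try tauto)
      have hdot' : (∑ i, Fin.append (0 : Fin r₁ → ℕ) u i * Fin.append (0 : Fin r₁ → ℕ) v i) = 0 := by
        rcases hmx with h1 | h1 <;> rcases hmy with h2 | h2
        · exact absurd (h1.trans h2.symm) huv'
        · rw [h1, h2]; exact hdot
        · rw [h1, h2, dot_comm]; exact hdot
        · exact absurd (h1.trans h2.symm) huv'
      have hdot1 : (∑ i, u i * v i) = 0 := by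
        rw [dot_append] at hdot'
        omega
      refine ⟨⟨u, v, huv, ?_, hdot1⟩, ?_, ?_⟩
      · ext w
        simp only [Set.mem_setOf_eq, Set.mem_insert_iff, Set.mem_singleton_iff]
        constructor
        · intro hw
          rcases (hfib2 (Fin.append 0 w)).1 (by rw [hphiE2, hw]) with h | h
          · exact Or.inl (he2inj _ _ h)
          · exact Or.inr (he2inj _ _ h)
        · rintro (rfl | rfl)
          · exact hu
          · exact hv
      · intro hmem
        obtain ⟨w, hw⟩ := (mem_closure_iff_phi _ _).1 hmem
        have hw2 := hw
        rw [phi_append] at hw2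
        have hW : phi (Fin.append A₁ A₂) (Fin.append (fstP w) (u + sndP w)) = d := by
          rw [phi_append', phi_add, hu]
          linear_combination (norm := module) hw2
        rcases fiber_d_structure hglue hred hd0 hd1 h0 hlam hW with ⟨hs0, hfd⟩ | ⟨hf0, hsd⟩
        · rw [sndP_append] at hs0
          have hu0 : u = 0 := by
            funext i
            have := congrFun hs0 i
            simp only [Pi.add_apply, Pi.zero_apply] at this ⊢
            omega
          have ha0 : a = 0 := by rw [← hu, hu0, phi_zero]
          have hv0 : v = 0 := h02 v (by rw [hv, ha0])
          exact huv (hu0.trans hv0.symm)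
        · rw [sndP_append] at hsd
          have hsd' : phi A₂ (v + sndP w) = d := by
            rw [phi_add, hv]
            rw [phi_add, hu] at hsd
            exact hsd
          have e1 := hZ2 _ hsd
          have e2 := hZ2 _ hsd'
          exact huv (add_right_cancel (e1.trans e2.symm))
      · intro hmem
        obtain ⟨w, hw⟩ := (mem_closure_iff_phi _ _).1 hmem
        have ht : phi (Fin.append A₁ A₂) (w + Fin.append lam (0 : Fin r₂ → ℕ)) = a := by
          rw [phi_add, hw, hphiE1, hlam]
          abel
        have hfst0 : fstP (w + Fin.append lam (0 : Fin r₂ → ℕ)) = fstP w + lam := by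
          funext j
          simp [fstP, Fin.append_left]
        have hlamzero : ∀ w' : Fin r₁ → ℕ, fstP w + lam = w' → w' = 0 → False := by
          intro w' hw' hw'0
          apply hlam0
          funext j
          have := congrFun (hw'.trans hw'0) j
          simp only [Pi.add_apply, Pi.zero_apply] at this ⊢
          omega
        rcases (hfib2 _).1 ht with h | h
        · have := congrArg fstP h
          rw [hfst0, fstP_append] at this
          exact hlamzero _ this rfl
        · have := congrArg fstP h
          rw [hfst0, fstP_append] at this
          exact hlamzero _ this rfl
    refine ⟨fun a hB => (main1 a hB).1, fun a hB => (main2 a hB).1, ?_⟩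
    intro a hab
    rcases hab with h | h
    · exact ⟨(main1 a h).2.1, (main1 a h).2.2⟩
    · exact ⟨(main2 a h).2.1, (main2 a h).2.2⟩
  · -- backward direction
    rintro ⟨hUP1, hUP2, hcond⟩
    intro a hBa
    obtain ⟨z, z', hz, hz', hnR⟩ := hBa
    have key : ∀ z z' : Fin (r₁ + r₂) → ℕ, phi (Fin.append A₁ A₂) z = a →
        phi (Fin.append A₁ A₂) z' = a → ¬ Rrel (Fin.append A₁ A₂) a z z' →
        ∀ k : ℤ, 0 ≤ k → phi A₁ (fstP z) = phi A₁ (fstP z') + k • d →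
        IsBetti A₁ a ∨ IsBetti A₂ a ∨ a = d := by
      clear hz hz' hnR z z'
      intro z z' hz hz' hnR k hk0 hk
      have hzz := hz
      have hz'z := hz'
      rw [phi_append] at hzz hz'z
      rcases eq_or_lt_of_le hk0 with hk00 | hkpos
      · -- k = 0 case
        rw [← hk00, zero_smul, add_zero] at hk
        by_cases hsz : sndP z = 0
        · left
          have haS1 : phi A₁ (fstP z) = a := by
            rw [hsz, phi_zero, add_zero] at hzz
            exact hzz
          have hs'0 : sndP z' = 0 := by
            apply h02
            have : phi A₂ (sndP z') = phi A₂ (sndP z) := by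
              linear_combination (norm := module) hz'z - hzz + hk
            rw [this, hsz, phi_zero]
          have haS1' : phi A₁ (fstP z') = a := by
            rw [hs'0, phi_zero, add_zero] at hz'z
            exact hz'z
          refine ⟨fstP z, fstP z', haS1, haS1', ?_⟩
          intro hr
          apply hnR
          have h8 : Fin.append (fstP z) (0 : Fin r₂ → ℕ) = z := by
            rw [← hsz, append_parts z]
          have h9 : Fin.append (fstP z') (0 : Fin r₂ → ℕ) = z' := by
            rw [← hs'0, append_parts z']
          have := lift_left' (A₂ := A₂) hr
          rwa [h8, h9] at this
        · by_cases hfz' : fstP z' = 0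
          · right; left
            have hf0 : fstP z = 0 := by
              apply h01
              rw [hk, hfz', phi_zero]
            have haS2 : phi A₂ (sndP z) = a := by
              rw [hf0, phi_zero, zero_add] at hzz
              exact hzz
            have haS2' : phi A₂ (sndP z') = a := by
              rw [hfz', phi_zero, zero_add] at hz'z
              exact hz'z
            refine ⟨sndP z, sndP z', haS2, haS2', ?_⟩
            intro hr
            apply hnR
            have h8 : Fin.append (0 : Fin r₁ → ℕ) (sndP z) = z := by
              rw [← hf0, append_parts z]
            have h9 : Fin.append (0 : Fin r₁ → ℕ) (sndP z') = z' := by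
              rw [← hfz', append_parts z']
            have := lift_right' (A₁ := A₁) hr
            rwa [h8, h9] at this
          · exfalso
            apply hnR
            have hmid : phi (Fin.append A₁ A₂) (Fin.append (fstP z') (sndP z)) = a := by
              rw [phi_append', ← hk]
              exact hzz
            obtain ⟨j, hj⟩ := exists_ne_zero hsz
            obtain ⟨i, hi⟩ := exists_ne_zero hfz'
            have hstep1 := step_of_snd_common (A₁ := A₁) (A₂ := A₂) (x := fstP z)
              (x' := fstP z') (y := sndP z) (y' := sndP z)
              (by rw [append_parts z]; exact hz) hmid hj hj
            rw [append_parts z] at hstep1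
            have hstep2 := step_of_fst_common (A₁ := A₁) (A₂ := A₂) (x := fstP z')
              (x' := fstP z') (y := sndP z) (y' := sndP z')
              hmid (by rw [append_parts z']; exact hz') hi hi
            rw [append_parts z'] at hstep2
            exact (Relation.ReflTransGen.single hstep1).tail hstep2
      · -- k ≥ 1 : use conn
        have hktn : k.toNat = (k.toNat - 1) + 1 := by omega
        have hsm : ((k.toNat - 1 + 1 : ℕ)) • d = k • d := by
          rw [← natCast_zsmul]
          congr 1
          omega
        have hdiff : phi A₁ (fstP z) = phi A₁ (fstP z') + ((k.toNat - 1) + 1) • d := by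
          rw [hsm]
          exact hk
        rcases conn hglue hred hd0 hd1 h0 hlam hmu hcond (k.toNat - 1) hz hz' hdiff with h | h
        · exact Or.inr (Or.inr h)
        · exact absurd h hnR
    have hclass : IsBetti A₁ a ∨ IsBetti A₂ a ∨ a = d := by
      obtain ⟨k, hk1, hk2⟩ := key_k_lemma hglue (hz.trans hz'.symm)
      rcases le_or_gt 0 k with h | h
      · exact key z z' hz hz' hnR k h hk1
      · refine key z' z hz' hz (fun hr => hnR (Rrel_symm _ _ hr)) (-k) (by omega) ?_
        rw [neg_smul]
        linear_combination (norm := module) -hk1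
    clear hnR hz hz' z z'
    rcases hclass with hB1 | hB2 | haeq
    · obtain ⟨hda, had⟩ := hcond a (Or.inl hB1)
      obtain ⟨u, v, huv, hfib1, hdot1⟩ := hUP1 a hB1
      have hu : phi A₁ u = a := by
        have : u ∈ {w : Fin r₁ → ℕ | phi A₁ w = a} := by rw [hfib1]; simp
        exact this
      have hv : phi A₁ v = a := by
        have : v ∈ {w : Fin r₁ → ℕ | phi A₁ w = a} := by rw [hfib1]; simp
        exact this
      refine ⟨Fin.append u (0 : Fin r₂ → ℕ), Fin.append v (0 : Fin r₂ → ℕ), fun h => huv (he1inj _ _ h), ?_, ?_⟩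
      · ext t
        simp only [Set.mem_setOf_eq, Set.mem_insert_iff, Set.mem_singleton_iff]
        constructor
        · intro ht
          obtain ⟨kt, hkt1, hkt2⟩ := fiber_decomp_left hglue hred hd0 hd1 hu ht
          have hkt0 : kt = 0 := by
            by_contra hkne
            apply had
            obtain ⟨m, rfl⟩ := Nat.exists_eq_succ_of_ne_zero hkne
            rw [mem_closure_iff_phi]
            refine ⟨Fin.append (fstP t) (m • mu), ?_⟩
            rw [phi_append', hkt2, phi_nsmul, hmu, succ_nsmul]
            module
          rw [hkt0, zero_smul] at hkt1 hkt2
          rw [sub_zero] at hkt2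
          have hst : sndP t = 0 := h02 _ hkt1
          have hmem1 : fstP t ∈ {w : Fin r₁ → ℕ | phi A₁ w = a} := hkt2
          rw [hfib1] at hmem1
          simp only [Set.mem_insert_iff, Set.mem_singleton_iff] at hmem1
          rcases hmem1 with h | h
          · left
            rw [← append_parts t, h, hst]
          · right
            rw [← append_parts t, h, hst]
        · rintro (rfl | rfl)
          · rw [hphiE1, hu]
          · rw [hphiE1, hv]
      · rw [dot_append]
        simp [hdot1]
    · obtain ⟨hda, had⟩ := hcond a (Or.inr hB2)
      obtain ⟨u, v, huv, hfib2, hdot2⟩ := hUP2 a hB2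
      have hu : phi A₂ u = a := by
        have : u ∈ {w : Fin r₂ → ℕ | phi A₂ w = a} := by rw [hfib2]; simp
        exact this
      have hv : phi A₂ v = a := by
        have : v ∈ {w : Fin r₂ → ℕ | phi A₂ w = a} := by rw [hfib2]; simp
        exact this
      refine ⟨Fin.append (0 : Fin r₁ → ℕ) u, Fin.append (0 : Fin r₁ → ℕ) v, fun h => huv (he2inj _ _ h), ?_, ?_⟩
      · ext t
        simp only [Set.mem_setOf_eq, Set.mem_insert_iff, Set.mem_singleton_iff]
        constructor
        · intro ht
          obtain ⟨kt, hkt1, hkt2⟩ := fiber_decomp_right hglue hred hd0 hd1 hu ht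
          have hkt0 : kt = 0 := by
            by_contra hkne
            apply had
            obtain ⟨m, rfl⟩ := Nat.exists_eq_succ_of_ne_zero hkne
            rw [mem_closure_iff_phi]
            refine ⟨Fin.append (m • lam) (sndP t), ?_⟩
            rw [phi_append', hkt2, phi_nsmul, hlam, succ_nsmul]
            module
          rw [hkt0, zero_smul] at hkt1 hkt2
          rw [sub_zero] at hkt2
          have hst : fstP t = 0 := h01 _ hkt1
          have hmem1 : sndP t ∈ {w : Fin r₂ → ℕ | phi A₂ w = a} := hkt2
          rw [hfib2] at hmem1
          simp only [Set.mem_insert_iff, Set.mem_singleton_iff] at hmem1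
          rcases hmem1 with h | h
          · left
            rw [← append_parts t, h, hst]
          · right
            rw [← append_parts t, h, hst]
        · rintro (rfl | rfl)
          · rw [hphiE2, hu]
          · rw [hphiE2, hv]
      · rw [dot_append]
        simp [hdot2]
    · -- a = d
      rw [haeq]
      have hZ1' : ∀ w, phi A₁ w = d → w = lam := by
        intro w hw
        by_contra hne
        obtain ⟨b, wdiv, hbB, hbw⟩ :=
          betti_divisor A₁ h01 (∑ i, w i) w lam d le_rfl hw hlam hne
        apply (hcond b (Or.inl hbB)).1
        have : d - b = phi A₁ wdiv := by rw [← hbw]; abel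
        rw [this, mem_closure_iff_phi]
        exact ⟨Fin.append wdiv (0 : Fin r₂ → ℕ), hphiE1 wdiv⟩
      have hZ2' : ∀ w, phi A₂ w = d → w = mu := by
        intro w hw
        by_contra hne
        obtain ⟨b, wdiv, hbB, hbw⟩ :=
          betti_divisor A₂ h02 (∑ i, w i) w mu d le_rfl hw hmu hne
        apply (hcond b (Or.inr hbB)).1
        have : d - b = phi A₂ wdiv := by rw [← hbw]; abel
        rw [this, mem_closure_iff_phi]
        exact ⟨Fin.append (0 : Fin r₁ → ℕ) wdiv, hphiE2 wdiv⟩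
      refine ⟨Fin.append lam (0 : Fin r₂ → ℕ), Fin.append (0 : Fin r₁ → ℕ) mu, ?_, ?_, ?_⟩
      · intro h
        apply hlam0
        rw [← fstP_append lam (0 : Fin r₂ → ℕ), h, fstP_append]
      · ext t
        simp only [Set.mem_setOf_eq, Set.mem_insert_iff, Set.mem_singleton_iff]
        constructor
        · intro ht
          rcases fiber_d_structure hglue hred hd0 hd1 h0 hlam ht with ⟨hs0, hfd⟩ | ⟨hf0, hsd⟩
          · left
            rw [← append_parts t, hs0, hZ1' _ hfd]
          · right
            rw [← append_parts t, hf0, hZ2' _ hsd]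
        · rintro (rfl | rfl)
          · exact hfibl
          · exact hfibm
      · rw [dot_append]
        simp
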